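/- arXiv:0906.2943 — 3 statements merged into one kernel-verified Lean document; each statement's English description precedes it below -/
import Mathlib

section
/- Let D ⊆ {z ∈ ℂ : Im z ≥ 0} and m₁, m₂ : D → [0,∞). Then the following are equivalent: (1) R_{m₁}(H) ⊆ R_{m₂}(H); (2) there exists λ > 0 with B_{m₁}(H) ⊆ λ·B_{m₂}(H) := {λ·G : G ∈ B_{m₂}(H)}; (3) there exists c > 0 such that m₁^♭(z) ≤ c·m₂^♭(z) for all z with Im z ≥ 0. -/
open Complex Filter Topology

noncomputable section

variable {H : Type*} [NormedAddCommGroup H] [InnerProductSpace ℂ H] [CompleteSpace H]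

/-- The set `R_m(H)`. -/
def RmSet (ev : H →ₗ[ℂ] (ℂ → ℂ)) (D : Set ℂ) (m : ℂ → ℝ) : Set H :=
  {F | ∃ C : ℝ, 0 ≤ C ∧ ∀ z ∈ D,
      ‖ev F z‖ ≤ C * m z ∧
      ‖(starRingEnd ℂ) (ev F ((starRingEnd ℂ) z))‖ ≤ C * m z}

/-- The norm `‖F‖_m`. -/
def mnorm (ev : H →ₗ[ℂ] (ℂ → ℂ)) (D : Set ℂ) (m : ℂ → ℝ) (F : H) : ℝ :=
  max ‖F‖ (sInf {C : ℝ | 0 ≤ C ∧ ∀ z ∈ D,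
      ‖ev F z‖ ≤ C * m z ∧
      ‖(starRingEnd ℂ) (ev F ((starRingEnd ℂ) z))‖ ≤ C * m z})

/-- The ball `B_m(H)` (for majorization on `D`). -/
def BmSet (ev : H →ₗ[ℂ] (ℂ → ℂ)) (D : Set ℂ) (m : ℂ → ℝ) : Set H :=
  {F | ‖F‖ ≤ 1 ∧ ∀ z ∈ D,
      ‖ev F z‖ ≤ m z ∧
      ‖(starRingEnd ℂ) (ev F ((starRingEnd ℂ) z))‖ ≤ m z}

/-- The sharp majorant `m^♭(z) = sup{|F(z)| : F ∈ B_m(H)}` (with `sup ∅ = 0`,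
following the convention of `Real.sSup`). -/
def mflat (ev : H →ₗ[ℂ] (ℂ → ℂ)) (D : Set ℂ) (m : ℂ → ℝ) (z : ℂ) : ℝ :=
  sSup ((fun F : H => ‖ev F z‖) '' BmSet ev D m)

section Helpers
variable (ev : H →ₗ[ℂ] (ℂ → ℂ)) (D : Set ℂ) (m : ℂ → ℝ)

lemma absR' {r : ℝ} (h : 0 ≤ r) : ‖((r:ℝ):ℂ)‖ = r := by
  rw [Complex.norm_real, Real.norm_eq_abs]; exact _root_.abs_of_nonneg h

lemma normC' {r : ℝ} (h : 0 ≤ r) : ‖((r:ℝ):ℂ)‖ = r := by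
  exact absR' h

lemma abs1sub' {r : ℝ} (h : r ≤ 1) : ‖(1 - (r:ℂ))‖ = 1 - r := by
  have h2 : (1 - (r:ℂ)) = (((1-r:ℝ)):ℂ) := by push_cast; ring
  rw [h2]; exact absR' (by linarith)


lemma closed_aux (heval : ∀ w : ℂ, Continuous fun F : H => ev F w) (z : ℂ) (a : ℝ) :
    IsClosed {F : H | ‖(ev F z)‖ ≤ a} :=
  isClosed_le (continuous_norm.comp (heval z)) continuous_const

lemma bmset_closed (heval : ∀ w : ℂ, Continuous fun F : H => ev F w) :
    IsClosed (BmSet ev D m) := by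
  have h : BmSet ev D m = {F : H | ‖F‖ ≤ 1} ∩
      ⋂ z ∈ D, ({F : H | ‖(ev F z)‖ ≤ m z} ∩
        {F : H | ‖(ev F ((starRingEnd ℂ) z))‖ ≤ m z}) := by
    ext F
    simp only [BmSet, Set.mem_setOf_eq, Set.mem_inter_iff, Set.mem_iInter,
      Complex.norm_conj]
  rw [h]
  exact (isClosed_le continuous_norm continuous_const).inter
    (isClosed_biInter fun z _ => (closed_aux ev heval z _).inter (closed_aux ev heval _ _))

lemma uniform_bound (heval : ∀ w : ℂ, Continuous fun F : H => ev F w)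
    (m₂ : ℂ → ℝ) (hm₁ : ∀ z ∈ D, 0 ≤ m z) (hm₂ : ∀ z ∈ D, 0 ≤ m₂ z)
    (hcov : ∀ F ∈ BmSet ev D m, ∃ C : ℝ, 0 ≤ C ∧ ∀ z ∈ D,
      ‖(ev F z)‖ ≤ C * m₂ z ∧
      ‖(ev F ((starRingEnd ℂ) z))‖ ≤ C * m₂ z) :
    ∃ c : ℝ, 1 ≤ c ∧ ∀ F ∈ BmSet ev D m, ∀ z ∈ D,
      ‖(ev F z)‖ ≤ c * m₂ z ∧
      ‖(ev F ((starRingEnd ℂ) z))‖ ≤ c * m₂ z := by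
  set B := BmSet ev D m with hBdef
  have hB : IsClosed B := bmset_closed ev D m heval
  have h0 : (0 : H) ∈ B := by
    refine ⟨by simp, fun z hz => ?_⟩
    simp only [map_zero, Pi.zero_apply]
    exact ⟨by simpa using hm₁ z hz, by simpa using hm₁ z hz⟩
  haveI : CompleteSpace B := hB.completeSpace_coe
  haveI : Nonempty B := ⟨⟨0, h0⟩⟩
  set f : ℕ → Set B := fun n =>
    {F | ∀ z ∈ D, ‖(ev F.1 z)‖ ≤ n * m₂ z ∧
      ‖(ev F.1 ((starRingEnd ℂ) z))‖ ≤ n * m₂ z} with hfdef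
  have hfc : ∀ n, IsClosed (f n) := by
    intro n
    have h : f n = Subtype.val ⁻¹'
        (⋂ z ∈ D, ({F : H | ‖(ev F z)‖ ≤ n * m₂ z} ∩
          {F : H | ‖(ev F ((starRingEnd ℂ) z))‖ ≤ n * m₂ z})) := by
      ext F
      simp only [hfdef, Set.mem_setOf_eq, Set.mem_preimage, Set.mem_iInter,
        Set.mem_inter_iff]
    rw [h]
    exact ((isClosed_biInter fun z _ =>
      (closed_aux ev heval z _).inter (closed_aux ev heval _ _))).preimage
      continuous_subtype_val
  have hfU : ⋃ n, f n = Set.univ := by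
    ext F
    simp only [Set.mem_iUnion, Set.mem_univ, iff_true]
    obtain ⟨C, hC0, hC⟩ := hcov F.1 F.2
    refine ⟨⌈C⌉₊, fun z hz => ?_⟩
    have h1 : C * m₂ z ≤ (⌈C⌉₊ : ℝ) * m₂ z :=
      mul_le_mul_of_nonneg_right (Nat.le_ceil C) (hm₂ z hz)
    exact ⟨(hC z hz).1.trans h1, (hC z hz).2.trans h1⟩
  obtain ⟨n, F₀, hF₀⟩ := nonempty_interior_of_iUnion_of_closed hfc hfU
  have hFn : F₀ ∈ f n := interior_subset hF₀
  rw [mem_interior_iff_mem_nhds, Metric.mem_nhds_iff] at hF₀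
  obtain ⟨ε, hε, hball⟩ := hF₀
  set t : ℝ := min (ε / 4) 1 with htdef
  have ht0 : 0 < t := lt_min (by linarith) one_pos
  have ht1 : t ≤ 1 := min_le_right _ _
  refine ⟨max (2 * n / t) 1, le_max_right _ _, ?_⟩
  intro F hF z hz
  set G : H := F₀.1 + ((t : ℝ) : ℂ) • (F - F₀.1) with hGdef
  have hGev : ∀ w : ℂ, ev G w = (1 - (t : ℂ)) * ev F₀.1 w + (t : ℂ) * ev F w := by
    intro w
    simp only [hGdef, map_add, map_smul, map_sub, Pi.add_apply, Pi.smul_apply,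
      Pi.sub_apply, smul_eq_mul]
    ring
  have habs : ∀ w : ℂ, ‖(ev G w)‖ ≤
      (1 - t) * ‖(ev F₀.1 w)‖ + t * ‖(ev F w)‖ := by
    intro w
    rw [hGev w]
    refine (norm_add_le _ _).trans ?_
    rw [norm_mul, norm_mul]
    rw [abs1sub' ht1, absR' ht0.le]
  have hGmem : G ∈ B := by
    refine ⟨?_, fun w hw => ?_⟩
    · have h : G = ((1 - t : ℝ) : ℂ) • F₀.1 + ((t : ℝ) : ℂ) • F := by
        rw [hGdef, smul_sub, show (((1 - t : ℝ)) : ℂ) = 1 - (t : ℂ) by push_cast; ring,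
          sub_smul, one_smul]
        abel
      rw [h]
      have h1 : ‖((1 - t : ℝ) : ℂ) • F₀.1‖ ≤ (1 - t) * 1 := by
        rw [norm_smul, normC' (by linarith : (0:ℝ) ≤ 1 - t)]
        exact mul_le_mul_of_nonneg_left F₀.2.1 (by linarith)
      have h2 : ‖((t : ℝ) : ℂ) • F‖ ≤ t * 1 := by
        rw [norm_smul, normC' ht0.le]
        exact mul_le_mul_of_nonneg_left hF.1 ht0.le
      calc ‖_ + _‖ ≤ _ + _ := norm_add_le _ _
        _ ≤ (1 - t) * 1 + t * 1 := add_le_add h1 h2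
        _ = 1 := by ring
    · have hb1 := (F₀.2.2 w hw).1
      have hb2 := (F₀.2.2 w hw).2
      have hc1 := (hF.2 w hw).1
      have hc2 := (hF.2 w hw).2
      rw [Complex.norm_conj] at hb2 hc2 ⊢
      constructor
      · calc ‖(ev G w)‖ ≤ _ := habs w
          _ ≤ (1 - t) * m w + t * m w := by
              apply add_le_add
              · exact mul_le_mul_of_nonneg_left hb1 (by linarith)
              · exact mul_le_mul_of_nonneg_left hc1 ht0.le
          _ = m w := by ring
      · calc ‖(ev G ((starRingEnd ℂ) w))‖ ≤ _ := habs _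
          _ ≤ (1 - t) * m w + t * m w := by
              apply add_le_add
              · exact mul_le_mul_of_nonneg_left hb2 (by linarith)
              · exact mul_le_mul_of_nonneg_left hc2 ht0.le
          _ = m w := by ring
  have hGball : (⟨G, hGmem⟩ : B) ∈ Metric.ball F₀ ε := by
    rw [Metric.mem_ball, Subtype.dist_eq, dist_eq_norm]
    have h : G - F₀.1 = ((t : ℝ) : ℂ) • (F - F₀.1) := by rw [hGdef]; abel
    rw [h, norm_smul, normC' ht0.le]
    have h2 : ‖F - F₀.1‖ ≤ 2 := by
      calc ‖F - F₀.1‖ ≤ ‖F‖ + ‖F₀.1‖ := norm_sub_le _ _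
        _ ≤ 1 + 1 := add_le_add hF.1 F₀.2.1
        _ = 2 := by norm_num
    calc t * ‖F - F₀.1‖ ≤ (ε / 4) * 2 := by
          apply mul_le_mul (min_le_left _ _) h2 (norm_nonneg _) (by linarith)
      _ < ε := by linarith
  have hGn : (⟨G, hGmem⟩ : B) ∈ f n := hball hGball
  have step : ∀ w : ℂ, ‖(ev F₀.1 w)‖ ≤ (n : ℝ) * m₂ z →
      ‖(ev G w)‖ ≤ (n : ℝ) * m₂ z →
      ‖(ev F w)‖ ≤ max (2 * n / t) 1 * m₂ z := by
    intro w h1 h2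
    have hev : (t : ℂ) * ev F w = ev G w - (1 - (t : ℂ)) * ev F₀.1 w := by
      rw [hGev w]; ring
    have h3 : t * ‖(ev F w)‖ ≤ 2 * n * m₂ z := by
      have habst : ‖((t : ℂ) * ev F w)‖ = t * ‖(ev F w)‖ := by
        rw [norm_mul, absR' ht0.le]
      rw [← habst, hev]
      have h4 : ‖((1 - (t : ℂ)) * ev F₀.1 w)‖ ≤ (n : ℝ) * m₂ z := by
        rw [norm_mul, abs1sub' ht1]
        calc (1 - t) * ‖(ev F₀.1 w)‖ ≤ 1 * ‖(ev F₀.1 w)‖ := by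
              apply mul_le_mul_of_nonneg_right (by linarith) (norm_nonneg _)
          _ = _ := one_mul _
          _ ≤ (n : ℝ) * m₂ z := h1
      calc ‖(ev G w - (1 - (t : ℂ)) * ev F₀.1 w)‖
          ≤ ‖(ev G w)‖ + ‖((1 - (t : ℂ)) * ev F₀.1 w)‖ := by
            exact (norm_sub_le _ _)
        _ ≤ (n : ℝ) * m₂ z + (n : ℝ) * m₂ z := add_le_add h2 h4
        _ = 2 * n * m₂ z := by ring
    have h5 : ‖(ev F w)‖ ≤ (2 * n / t) * m₂ z := by
      rw [div_mul_eq_mul_div, le_div_iff₀ ht0]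
      linarith [h3]
    refine h5.trans (mul_le_mul_of_nonneg_right (le_max_left _ _) (hm₂ z hz))
  exact ⟨step z (hFn z hz).1 (hGn z hz).1, step _ (hFn z hz).2 (hGn z hz).2⟩

lemma mflat_nonneg (ev : H →ₗ[ℂ] (ℂ → ℂ)) (D : Set ℂ) (m : ℂ → ℝ) (z : ℂ) :
    0 ≤ mflat ev D m z :=
  Real.sSup_nonneg (by rintro x ⟨F, _, rfl⟩; exact norm_nonneg _)

lemma bddAbove_aux (ev : H →ₗ[ℂ] (ℂ → ℂ))
    (heval : ∀ w : ℂ, Continuous fun F : H => ev F w)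
    (D : Set ℂ) (m : ℂ → ℝ) (z : ℂ) :
    BddAbove ((fun F : H => ‖(ev F z)‖) '' BmSet ev D m) := by
  set φ : H →L[ℂ] ℂ := ⟨(LinearMap.proj z).comp ev, heval z⟩ with hφ
  refine ⟨‖φ‖, ?_⟩
  rintro x ⟨F, hF, rfl⟩
  have h := φ.le_opNorm F
  simp only [hφ, ContinuousLinearMap.coe_mk', LinearMap.coe_comp, Function.comp_apply,
    LinearMap.proj_apply] at h
  calc ‖(ev F z)‖ ≤ ‖φ‖ * ‖F‖ := h
    _ ≤ ‖φ‖ * 1 := by gcongr; exact hF.1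
    _ = ‖φ‖ := mul_one _

lemma le_mflat (ev : H →ₗ[ℂ] (ℂ → ℂ))
    (heval : ∀ w : ℂ, Continuous fun F : H => ev F w)
    (D : Set ℂ) (m : ℂ → ℝ) (z : ℂ) {F : H} (hF : F ∈ BmSet ev D m) :
    ‖(ev F z)‖ ≤ mflat ev D m z :=
  le_csSup (bddAbove_aux ev heval D m z) ⟨F, hF, rfl⟩

lemma mflat_le (ev : H →ₗ[ℂ] (ℂ → ℂ)) (D : Set ℂ) (m : ℂ → ℝ) {z : ℂ}
    (hz : z ∈ D) (hm : 0 ≤ m z) : mflat ev D m z ≤ m z :=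
  Real.sSup_le (by rintro x ⟨F, hF, rfl⟩; exact (hF.2 z hz).1) hm

end Helpers

/-- **Statement 17.** `R_{m₁}(H) ⊆ R_{m₂}(H)` iff `B_{m₁}(H) ⊆ λ·B_{m₂}(H)` for some
`λ > 0`, iff `m₁^♭ ≲ m₂^♭` on the closed upper half-plane. -/
theorem rm_subset_iff_ball_subset_iff_mflat_le
    (ev : H →ₗ[ℂ] (ℂ → ℂ)) (hinj : Function.Injective ev)
    (hentire : ∀ F : H, Differentiable ℂ (ev F))
    (heval : ∀ w : ℂ, Continuous fun F : H => ev F w)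
    (hsharp : ∀ F : H, ∃ G : H,
      (∀ z : ℂ, ev G z = (starRingEnd ℂ) (ev F ((starRingEnd ℂ) z))) ∧ ‖G‖ = ‖F‖)
    (D : Set ℂ) (hD : D ⊆ {z : ℂ | 0 ≤ z.im})
    (m₁ m₂ : ℂ → ℝ) (hm₁ : ∀ z ∈ D, 0 ≤ m₁ z) (hm₂ : ∀ z ∈ D, 0 ≤ m₂ z) :
    ((RmSet ev D m₁ ⊆ RmSet ev D m₂) ↔
      (∃ l : ℝ, 0 < l ∧
        BmSet ev D m₁ ⊆ (fun G : H => (l : ℂ) • G) '' BmSet ev D m₂)) ∧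
    ((∃ l : ℝ, 0 < l ∧
        BmSet ev D m₁ ⊆ (fun G : H => (l : ℂ) • G) '' BmSet ev D m₂) ↔
      (∃ c : ℝ, 0 < c ∧ ∀ z : ℂ, 0 ≤ z.im →
        mflat ev D m₁ z ≤ c * mflat ev D m₂ z)) := by
  constructor
  · constructor
    · -- (1) → (2), via Baire category
      intro hR
      have hcov : ∀ F ∈ BmSet ev D m₁, ∃ C : ℝ, 0 ≤ C ∧ ∀ z ∈ D,
          ‖(ev F z)‖ ≤ C * m₂ z ∧
          ‖(ev F ((starRingEnd ℂ) z))‖ ≤ C * m₂ z := by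
        intro F hF
        have hFR : F ∈ RmSet ev D m₁ :=
          ⟨1, zero_le_one, fun z hz => by simpa only [one_mul] using hF.2 z hz⟩
        obtain ⟨C, hC0, hC⟩ := hR hFR
        refine ⟨C, hC0, fun z hz => ⟨(hC z hz).1, ?_⟩⟩
        have h := (hC z hz).2
        rwa [Complex.norm_conj] at h
      obtain ⟨c, hc1, hc⟩ := uniform_bound ev D m₁ heval m₂ hm₁ hm₂ hcov
      have hc0 : (0:ℝ) < c := lt_of_lt_of_le one_pos hc1
      refine ⟨c, hc0, fun F hF => ?_⟩
      refine ⟨((c⁻¹ : ℝ) : ℂ) • F, ⟨?_, fun z hz => ?_⟩, ?_⟩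
      · rw [norm_smul, normC' (by positivity)]
        rw [inv_mul_le_iff₀ hc0, mul_one]
        exact hF.1.trans hc1
      · have hev : ∀ w : ℂ, ev (((c⁻¹ : ℝ) : ℂ) • F) w = ((c⁻¹ : ℝ) : ℂ) * ev F w :=
          fun w => by simp [map_smul]
        obtain ⟨h1, h2⟩ := hc F hF z hz
        constructor
        · rw [hev, norm_mul, absR' (by positivity), inv_mul_le_iff₀ hc0]
          exact h1
        · rw [Complex.norm_conj, hev, norm_mul, absR' (by positivity), inv_mul_le_iff₀ hc0]
          exact h2
      · show ((c : ℝ) : ℂ) • (((c⁻¹ : ℝ) : ℂ) • F) = F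
        rw [smul_smul, ← Complex.ofReal_mul, mul_inv_cancel₀ hc0.ne', Complex.ofReal_one,
          one_smul]
    · -- (2) → (1)
      rintro ⟨l, hl, hB⟩ F ⟨C, hC0, hC⟩
      set t : ℝ := max ‖F‖ C + 1 with htdef
      have htC : C ≤ t := by
        have := le_max_right ‖F‖ C; simp only [htdef]; linarith
      have htF : ‖F‖ ≤ t := by
        have := le_max_left ‖F‖ C; simp only [htdef]; linarith
      have ht0 : (0:ℝ) < t := lt_of_le_of_lt (norm_nonneg F) (by
        have := le_max_left ‖F‖ C; simp only [htdef]; linarith)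
      have hmem : ((t⁻¹ : ℝ) : ℂ) • F ∈ BmSet ev D m₁ := by
        refine ⟨?_, fun z hz => ?_⟩
        · rw [norm_smul, normC' (by positivity), inv_mul_le_iff₀ ht0, mul_one]
          exact htF
        · have hev : ∀ w : ℂ, ev (((t⁻¹ : ℝ) : ℂ) • F) w = ((t⁻¹ : ℝ) : ℂ) * ev F w :=
            fun w => by simp [map_smul]
          have hbd : C * m₁ z ≤ t * m₁ z :=
            mul_le_mul_of_nonneg_right htC (hm₁ z hz)
          constructor
          · rw [hev, norm_mul, absR' (by positivity), inv_mul_le_iff₀ ht0]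
            exact (hC z hz).1.trans hbd
          · rw [Complex.norm_conj, hev, norm_mul, absR' (by positivity), inv_mul_le_iff₀ ht0]
            have h := (hC z hz).2
            rw [Complex.norm_conj] at h
            exact h.trans hbd
      obtain ⟨G, hG, hEq⟩ := hB hmem
      have hFeq : F = ((t * l : ℝ) : ℂ) • G := by
        have h2 := congrArg (fun x : H => ((t : ℝ) : ℂ) • x) hEq
        simp only [smul_smul] at h2
        rw [← Complex.ofReal_mul, ← Complex.ofReal_mul, mul_inv_cancel₀ ht0.ne',
          Complex.ofReal_one, one_smul] at h2
        exact h2.symm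
      have hev : ∀ w : ℂ, ‖(ev F w)‖ = (t * l) * ‖(ev G w)‖ := by
        intro w
        conv_lhs => rw [hFeq]
        rw [map_smul]
        simp only [Pi.smul_apply, smul_eq_mul, norm_mul]
        rw [absR' (by positivity)]
      refine ⟨t * l, by positivity, fun z hz => ?_⟩
      constructor
      · rw [hev z]
        exact mul_le_mul_of_nonneg_left (hG.2 z hz).1 (by positivity)
      · rw [Complex.norm_conj, hev]
        have h := (hG.2 z hz).2
        rw [Complex.norm_conj] at h
        exact mul_le_mul_of_nonneg_left h (by positivity)
  · constructor
    · -- (2) → (3)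
      rintro ⟨l, hl, hB⟩
      refine ⟨l, hl, fun z _ => ?_⟩
      apply Real.sSup_le ?_ (mul_nonneg hl.le (mflat_nonneg ev D m₂ z))
      rintro x ⟨F, hF, rfl⟩
      obtain ⟨G, hG, hEq⟩ := hB hF
      have hev : ‖(ev F z)‖ = l * ‖(ev G z)‖ := by
        conv_lhs => rw [← hEq]
        simp only [map_smul, Pi.smul_apply, smul_eq_mul, norm_mul]
        rw [absR' hl.le]
      show ‖(ev F z)‖ ≤ l * mflat ev D m₂ z
      rw [hev]
      exact mul_le_mul_of_nonneg_left (le_mflat ev heval D m₂ z hG) hl.le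
    · -- (3) → (2)
      rintro ⟨c, hc, hflat⟩
      have hl1 : (1:ℝ) ≤ max c 1 := le_max_right _ _
      have hl0 : (0:ℝ) < max c 1 := lt_of_lt_of_le one_pos hl1
      refine ⟨max c 1, hl0, fun F hF => ?_⟩
      obtain ⟨G, hGev, hGnorm⟩ := hsharp F
      have hGmem : G ∈ BmSet ev D m₁ := by
        refine ⟨by rw [hGnorm]; exact hF.1, fun z hz => ?_⟩
        constructor
        · rw [hGev z]
          exact (hF.2 z hz).2
        · rw [hGev ((starRingEnd ℂ) z)]
          simp only [Complex.conj_conj, Complex.norm_conj]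
          exact (hF.2 z hz).1
      have key : ∀ z ∈ D, ‖(ev F z)‖ ≤ c * m₂ z ∧
          ‖(ev F ((starRingEnd ℂ) z))‖ ≤ c * m₂ z := by
        intro z hz
        have him : 0 ≤ z.im := hD hz
        have h1 : mflat ev D m₁ z ≤ c * mflat ev D m₂ z := hflat z him
        have h2 : mflat ev D m₂ z ≤ m₂ z := mflat_le ev D m₂ hz (hm₂ z hz)
        have hchain : mflat ev D m₁ z ≤ c * m₂ z :=
          h1.trans (mul_le_mul_of_nonneg_left h2 hc.le)
        constructor
        · exact (le_mflat ev heval D m₁ z hF).trans hchain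
        · have h3 := le_mflat ev heval D m₁ z hGmem
          rw [hGev z, Complex.norm_conj] at h3
          exact h3.trans hchain
      refine ⟨(((max c 1)⁻¹ : ℝ) : ℂ) • F, ⟨?_, fun z hz => ?_⟩, ?_⟩
      · rw [norm_smul, normC' (by positivity), inv_mul_le_iff₀ hl0, mul_one]
        exact hF.1.trans hl1
      · have hev : ∀ w : ℂ, ev ((((max c 1)⁻¹ : ℝ) : ℂ) • F) w
            = (((max c 1)⁻¹ : ℝ) : ℂ) * ev F w := fun w => by simp [map_smul]
        obtain ⟨h1, h2⟩ := key z hz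
        have hcl : c * m₂ z ≤ max c 1 * m₂ z :=
          mul_le_mul_of_nonneg_right (le_max_left _ _) (hm₂ z hz)
        constructor
        · rw [hev, norm_mul, absR' (by positivity), inv_mul_le_iff₀ hl0]
          exact h1.trans hcl
        · rw [Complex.norm_conj, hev, norm_mul, absR' (by positivity), inv_mul_le_iff₀ hl0]
          exact h2.trans hcl
      · show ((max c 1 : ℝ) : ℂ) • ((((max c 1)⁻¹ : ℝ) : ℂ) • F) = F
        rw [smul_smul, ← Complex.ofReal_mul, mul_inv_cancel₀ hl0.ne', Complex.ofReal_one,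
          one_smul]
end
end

section
/- Let D ⊆ {z ∈ ℂ : Im z ≥ 0} and m₁, m₂ : D → [0,∞). Then: (a) R_{m₁}(H) = R_{m₂}(H) if and only if there exist c₁, c₂ > 0 with c₁·m₂^♭(z) ≤ m₁^♭(z) ≤ c₂·m₂^♭(z) for all z with Im z ≥ 0, if and only if there exist λ₁, λ₂ > 0 with λ₁·B_{m₁}(H) ⊆ B_{m₂}(H) ⊆ λ₂·B_{m₁}(H); moreover, if R_{m₁}(H) = R_{m₂}(H) then the norms ‖·‖_{m₁} and ‖·‖_{m₂} are equivalent on this set. (b) B_{m₁}(H) = B_{m₂}(H) if and only if m₁^♭(z) = m₂^♭(z) for all z with Im z ≥ 0, if and only if R_{m₁}(H) = R_{m₂}(H) and ‖F‖_{m₁} = ‖F‖_{m₂} for all F in this set. -/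
open Complex Filter Topology

noncomputable section

variable {H : Type*} [NormedAddCommGroup H] [InnerProductSpace ℂ H] [CompleteSpace H]

set_option linter.unusedSectionVars false
set_option linter.unusedVariables false

namespace Aux

/-- The set of admissible constants for `F`. -/
def ASet (ev : H →ₗ[ℂ] (ℂ → ℂ)) (D : Set ℂ) (m : ℂ → ℝ) (F : H) : Set ℝ :=
  {C : ℝ | 0 ≤ C ∧ ∀ z ∈ D,
      ‖ev F z‖ ≤ C * m z ∧
      ‖(starRingEnd ℂ) (ev F ((starRingEnd ℂ) z))‖ ≤ C * m z}

variable (ev : H →ₗ[ℂ] (ℂ → ℂ)) {D : Set ℂ} {m m₁ m₂ : ℂ → ℝ}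

lemma mnorm_eq (F : H) : mnorm ev D m F = max ‖F‖ (sInf (ASet ev D m F)) := rfl

lemma mem_Rm_iff (F : H) : F ∈ RmSet ev D m ↔ (ASet ev D m F).Nonempty := Iff.rfl

lemma bddBelow_ASet (F : H) : BddBelow (ASet ev D m F) :=
  ⟨0, fun _ hC => hC.1⟩

lemma zero_mem_Bm (hm : ∀ z ∈ D, 0 ≤ m z) : (0 : H) ∈ BmSet ev D m := by
  refine ⟨by simp, fun z hz => ?_⟩
  simp [hm z hz]

lemma sInf_mem_ASet {F : H} (hF : (ASet ev D m F).Nonempty) (hm : ∀ z ∈ D, 0 ≤ m z) :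
    sInf (ASet ev D m F) ∈ ASet ev D m F := by
  have h0 : 0 ≤ sInf (ASet ev D m F) := le_csInf hF fun C hC => hC.1
  refine ⟨h0, fun z hz => ?_⟩
  constructor
  · rcases eq_or_lt_of_le (hm z hz) with h | h
    · obtain ⟨C, hC⟩ := hF
      have := (hC.2 z hz).1
      rw [← h] at this ⊢
      simpa using this
    · rw [← div_le_iff₀ h]
      refine le_csInf hF fun C hC => ?_
      rw [div_le_iff₀ h]
      exact (hC.2 z hz).1
  · rcases eq_or_lt_of_le (hm z hz) with h | h
    · obtain ⟨C, hC⟩ := hF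
      have := (hC.2 z hz).2
      rw [← h] at this ⊢
      simpa using this
    · rw [← div_le_iff₀ h]
      refine le_csInf hF fun C hC => ?_
      rw [div_le_iff₀ h]
      exact (hC.2 z hz).2

lemma norm_le_mnorm (F : H) : ‖F‖ ≤ mnorm ev D m F := le_max_left _ _

lemma mnorm_le {F : H} {C : ℝ} (hC : C ∈ ASet ev D m F) (hn : ‖F‖ ≤ C) :
    mnorm ev D m F ≤ C :=
  max_le hn (csInf_le (bddBelow_ASet ev F) hC)

/-- The sharp companion of a member of `BmSet` is a member. -/
lemma sharp_mem_Bm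
    (hsharp : ∀ F : H, ∃ G : H,
      (∀ z : ℂ, ev G z = (starRingEnd ℂ) (ev F ((starRingEnd ℂ) z))) ∧ ‖G‖ = ‖F‖)
    {F : H} (hF : F ∈ BmSet ev D m) :
    ∃ G ∈ BmSet ev D m, ∀ z : ℂ, ev G z = (starRingEnd ℂ) (ev F ((starRingEnd ℂ) z)) := by
  obtain ⟨G, hG, hGn⟩ := hsharp F
  refine ⟨G, ⟨hGn ▸ hF.1, fun z hz => ?_⟩, hG⟩
  constructor
  · rw [hG z]
    exact (hF.2 z hz).2
  · rw [hG ((starRingEnd ℂ) z)]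
    simpa using (hF.2 z hz).1

/-- Membership of a positive scalar multiple in `BmSet` from bounds. -/
lemma smul_mem_Bm {F : H} {K : ℝ} (hK : 0 < K) (hn : ‖F‖ ≤ K)
    (hb : ∀ z ∈ D, ‖ev F z‖ ≤ K * m z ∧
      ‖(starRingEnd ℂ) (ev F ((starRingEnd ℂ) z))‖ ≤ K * m z) :
    ((K⁻¹ : ℝ) : ℂ) • F ∈ BmSet ev D m := by
  have hK0 : 0 < K := hK
  have hKi : (0:ℝ) < K⁻¹ := inv_pos.2 hK0
  constructor
  · rw [norm_smul]
    simp only [Complex.norm_real, Real.norm_eq_abs, abs_of_pos hKi]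
    calc K⁻¹ * ‖F‖ ≤ K⁻¹ * K := mul_le_mul_of_nonneg_left hn (le_of_lt hKi)
      _ = 1 := inv_mul_cancel₀ (ne_of_gt hK0)
  · intro z hz
    have h1 := (hb z hz).1
    have h2 := (hb z hz).2
    constructor
    · rw [map_smul]
      simp only [Pi.smul_apply, smul_eq_mul, map_mul, norm_mul, Complex.norm_real, Real.norm_eq_abs,
        abs_of_pos hKi]
      calc K⁻¹ * ‖ev F z‖ ≤ K⁻¹ * (K * m z) := by
            exact mul_le_mul_of_nonneg_left h1 (le_of_lt hKi)
        _ = m z := by field_simp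
    · have h2' : ‖ev F ((starRingEnd ℂ) z)‖ ≤ K * m z := by simpa using h2
      rw [map_smul]
      simp only [Pi.smul_apply, smul_eq_mul, map_mul, norm_mul, Complex.norm_conj,
        Complex.norm_real, Real.norm_eq_abs, abs_of_pos hKi]
      calc K⁻¹ * ‖ev F ((starRingEnd ℂ) z)‖
            ≤ K⁻¹ * (K * m z) := mul_le_mul_of_nonneg_left h2' (le_of_lt hKi)
        _ = m z := by field_simp


/-- Point evaluations are bounded. -/
lemma eval_bound (heval : ∀ w : ℂ, Continuous fun F : H => ev F w) (z : ℂ) :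
    ∃ K : ℝ, 0 ≤ K ∧ ∀ F : H, ‖ev F z‖ ≤ K * ‖F‖ := by
  let L : H →L[ℂ] ℂ := ⟨(LinearMap.proj z).comp ev, heval z⟩
  refine ⟨‖L‖, norm_nonneg _, fun F => ?_⟩
  have := L.le_opNorm F
  exact this

lemma isClosed_boundSet (heval : ∀ w : ℂ, Continuous fun F : H => ev F w)
    (D : Set ℂ) (g : ℂ → ℝ) :
    IsClosed {F : H | ∀ z ∈ D,
      ‖ev F z‖ ≤ g z ∧
      ‖(starRingEnd ℂ) (ev F ((starRingEnd ℂ) z))‖ ≤ g z} := by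
  have : {F : H | ∀ z ∈ D,
      ‖ev F z‖ ≤ g z ∧
      ‖(starRingEnd ℂ) (ev F ((starRingEnd ℂ) z))‖ ≤ g z}
      = ⋂ z ∈ D, ({F : H | ‖ev F z‖ ≤ g z} ∩
          {F : H | ‖ev F ((starRingEnd ℂ) z)‖ ≤ g z}) := by
    ext F
    simp only [Set.mem_setOf_eq, Set.mem_iInter, Set.mem_inter_iff, Complex.norm_conj]
  rw [this]
  refine isClosed_biInter fun z _ => IsClosed.inter ?_ ?_
  · exact isClosed_le (continuous_norm.comp (heval z)) continuous_const
  · exact isClosed_le (continuous_norm.comp (heval ((starRingEnd ℂ) z))) continuous_const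

lemma isClosed_Bm (heval : ∀ w : ℂ, Continuous fun F : H => ev F w) (D : Set ℂ)
    (m : ℂ → ℝ) : IsClosed (BmSet ev D m) := by
  have : BmSet ev D m = {F : H | ‖F‖ ≤ 1} ∩ {F : H | ∀ z ∈ D,
      ‖ev F z‖ ≤ m z ∧
      ‖(starRingEnd ℂ) (ev F ((starRingEnd ℂ) z))‖ ≤ m z} := rfl
  rw [this]
  exact (isClosed_le continuous_norm continuous_const).inter (isClosed_boundSet ev heval D m)

lemma bddAbove_flatSet (heval : ∀ w : ℂ, Continuous fun F : H => ev F w) (z : ℂ) :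
    BddAbove ((fun F : H => ‖ev F z‖) '' BmSet ev D m) := by
  obtain ⟨K, _, hK⟩ := eval_bound ev heval z
  refine ⟨K, fun x hx => ?_⟩
  obtain ⟨F, hF, rfl⟩ := hx
  calc ‖ev F z‖ ≤ K * ‖F‖ := hK F
    _ ≤ K * 1 := mul_le_mul_of_nonneg_left hF.1 (by linarith [hK 0, (by simp [map_zero] : ‖ev (0:H) z‖ = 0)])
    _ = K := mul_one K

lemma mflat_nonneg (hm : ∀ z ∈ D, 0 ≤ m z) (heval : ∀ w : ℂ, Continuous fun F : H => ev F w)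
    (z : ℂ) : 0 ≤ mflat ev D m z := by
  have h0 : (0:ℝ) ∈ (fun F : H => ‖ev F z‖) '' BmSet ev D m :=
    ⟨0, zero_mem_Bm ev hm, by simp⟩
  exact le_csSup (bddAbove_flatSet ev heval z) h0

lemma abs_le_mflat (heval : ∀ w : ℂ, Continuous fun F : H => ev F w)
    {F : H} (hF : F ∈ BmSet ev D m) (z : ℂ) :
    ‖ev F z‖ ≤ mflat ev D m z :=
  le_csSup (bddAbove_flatSet ev heval z) ⟨F, hF, rfl⟩

lemma mflat_le_m (hm : ∀ z ∈ D, 0 ≤ m z) {z : ℂ} (hz : z ∈ D) :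
    mflat ev D m z ≤ m z := by
  refine Real.sSup_le ?_ (hm z hz)
  rintro x ⟨F, hF, rfl⟩
  exact (hF.2 z hz).1


lemma abs_of_combo {a b : ℂ} {t M : ℝ} (ht0 : 0 < t) (ht1 : t ≤ 1)
    (hc : ‖((1 - t : ℝ) : ℂ) * a + ((t : ℝ) : ℂ) * b‖ ≤ M)
    (ha : ‖a‖ ≤ M) : ‖b‖ ≤ 2 * M / t := by
  have hM : 0 ≤ M := le_trans (norm_nonneg a) ha
  have key : t * ‖b‖ ≤ 2 * M := by
    have e : ((t : ℝ) : ℂ) * b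
        = (((1 - t : ℝ) : ℂ) * a + ((t : ℝ) : ℂ) * b) - ((1 - t : ℝ) : ℂ) * a := by ring
    have h1 : ‖((t : ℝ) : ℂ) * b‖
        ≤ ‖((1 - t : ℝ) : ℂ) * a + ((t : ℝ) : ℂ) * b‖
          + ‖((1 - t : ℝ) : ℂ) * a‖ := by
      rw [e]
      simpa using norm_sub_le
        ((((1 - t : ℝ) : ℂ) * a + ((t : ℝ) : ℂ) * b)) (((1 - t : ℝ) : ℂ) * a)
    have h2 : ‖((t : ℝ) : ℂ) * b‖ = t * ‖b‖ := by
      rw [norm_mul, Complex.norm_real, Real.norm_eq_abs, abs_of_pos ht0]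
    have h3 : ‖((1 - t : ℝ) : ℂ) * a‖ ≤ M := by
      rw [norm_mul, Complex.norm_real, Real.norm_eq_abs, _root_.abs_of_nonneg (by linarith : (0:ℝ) ≤ 1 - t)]
      calc (1 - t) * ‖a‖ ≤ 1 * M :=
            mul_le_mul (by linarith) ha (norm_nonneg a) zero_le_one
        _ = M := one_mul M
    rw [← h2]
    calc ‖((t : ℝ) : ℂ) * b‖ ≤ _ + _ := h1
      _ ≤ M + M := add_le_add hc h3
      _ = 2 * M := by ring
  rw [le_div_iff₀ ht0]
  linarith

/-- The Baire category uniform-boundedness step. -/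
lemma uniform_bound (heval : ∀ w : ℂ, Continuous fun F : H => ev F w)
    (hm₁ : ∀ z ∈ D, 0 ≤ m₁ z) (hm₂ : ∀ z ∈ D, 0 ≤ m₂ z)
    (hsub : BmSet ev D m₁ ⊆ RmSet ev D m₂) :
    ∃ K : ℝ, 1 ≤ K ∧ ∀ F ∈ BmSet ev D m₁, ∀ z ∈ D,
      ‖ev F z‖ ≤ K * m₂ z ∧
      ‖(starRingEnd ℂ) (ev F ((starRingEnd ℂ) z))‖ ≤ K * m₂ z := by
  set S := BmSet ev D m₁ with hS
  have hclosed : IsClosed S := isClosed_Bm ev heval D m₁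
  haveI : CompleteSpace S := hclosed.completeSpace_coe
  haveI : Nonempty S := ⟨⟨0, zero_mem_Bm ev hm₁⟩⟩
  set f : ℕ → Set S := fun n => Subtype.val ⁻¹' {F : H | ∀ z ∈ D,
      ‖ev F z‖ ≤ (n : ℝ) * m₂ z ∧
      ‖(starRingEnd ℂ) (ev F ((starRingEnd ℂ) z))‖ ≤ (n : ℝ) * m₂ z} with hf
  have hfc : ∀ n, IsClosed (f n) := fun n =>
    (isClosed_boundSet ev heval D (fun z => (n : ℝ) * m₂ z)).preimage continuous_subtype_val
  have hcover : ⋃ n, f n = Set.univ := by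
    ext F
    simp only [Set.mem_iUnion, Set.mem_univ, iff_true]
    obtain ⟨C, hC0, hC⟩ := hsub F.2
    refine ⟨⌈C⌉₊, fun z hz => ?_⟩
    have hle : C * m₂ z ≤ (⌈C⌉₊ : ℝ) * m₂ z :=
      mul_le_mul_of_nonneg_right (Nat.le_ceil C) (hm₂ z hz)
    exact ⟨(hC z hz).1.trans hle, (hC z hz).2.trans hle⟩
  obtain ⟨n, x, hx⟩ := nonempty_interior_of_iUnion_of_closed hfc hcover
  obtain ⟨ε, hε, hball⟩ := Metric.isOpen_iff.1 isOpen_interior x hx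
  have hball' : Metric.ball x ε ⊆ f n := hball.trans interior_subset
  have hxn : x ∈ f n := interior_subset hx
  set t : ℝ := min (ε / 3) 1 with ht
  have ht0 : 0 < t := lt_min (by linarith) one_pos
  have ht1 : t ≤ 1 := min_le_right _ _
  set K : ℝ := 2 * ((n : ℝ) + 1) / t with hKdef
  have hn1 : (1 : ℝ) ≤ (n : ℝ) + 1 := by
    have := Nat.cast_nonneg (α := ℝ) n
    linarith
  have hK1 : 1 ≤ K := by
    rw [hKdef, le_div_iff₀ ht0]
    nlinarith
  refine ⟨K, hK1, fun F hF z hz => ?_⟩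
  have hm2z : 0 ≤ m₂ z := hm₂ z hz
  -- the convex combination y
  set y : H := ((1 - t : ℝ) : ℂ) • (x : H) + ((t : ℝ) : ℂ) • F with hy
  have hyS : y ∈ S := by
    constructor
    · calc ‖y‖ ≤ ‖((1 - t : ℝ) : ℂ) • (x : H)‖ + ‖((t : ℝ) : ℂ) • F‖ := norm_add_le _ _
        _ = (1 - t) * ‖(x : H)‖ + t * ‖F‖ := by
            rw [norm_smul, norm_smul]
            simp only [Complex.norm_real, Real.norm_eq_abs]
            rw [_root_.abs_of_nonneg (by linarith : (0:ℝ) ≤ 1 - t), _root_.abs_of_pos ht0]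
        _ ≤ (1 - t) * 1 + t * 1 := by
            gcongr
            · exact x.2.1
            · exact hF.1
        _ = 1 := by ring
    · intro w hw
      have e1 : ev y w = ((1 - t : ℝ) : ℂ) * ev (x : H) w + ((t : ℝ) : ℂ) * ev F w := by
        simp [hy, map_add, map_smul]
      have e2 : ev y ((starRingEnd ℂ) w)
          = ((1 - t : ℝ) : ℂ) * ev (x : H) ((starRingEnd ℂ) w)
            + ((t : ℝ) : ℂ) * ev F ((starRingEnd ℂ) w) := by
        simp [hy, map_add, map_smul]
      constructor
      · rw [e1]
        calc ‖_‖ ≤ ‖((1 - t : ℝ) : ℂ) * ev (x : H) w‖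
              + ‖((t : ℝ) : ℂ) * ev F w‖ := norm_add_le _ _
          _ = (1 - t) * ‖ev (x : H) w‖ + t * ‖ev F w‖ := by
              rw [norm_mul, norm_mul, Complex.norm_real, Real.norm_eq_abs, Complex.norm_real, Real.norm_eq_abs,
                _root_.abs_of_nonneg (by linarith : (0:ℝ) ≤ 1 - t), _root_.abs_of_pos ht0]
          _ ≤ (1 - t) * m₁ w + t * m₁ w := by
              gcongr
              · exact ((x.2).2 w hw).1
              · exact (hF.2 w hw).1
          _ = m₁ w := by ring
      · rw [e2, map_add, map_mul, map_mul]
        simp only [Complex.conj_ofReal]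
        calc ‖_‖ ≤ ‖((1 - t : ℝ) : ℂ)
              * (starRingEnd ℂ) (ev (x : H) ((starRingEnd ℂ) w))‖
              + ‖((t : ℝ) : ℂ) * (starRingEnd ℂ) (ev F ((starRingEnd ℂ) w))‖ :=
            norm_add_le _ _
          _ = (1 - t) * ‖(starRingEnd ℂ) (ev (x : H) ((starRingEnd ℂ) w))‖
              + t * ‖(starRingEnd ℂ) (ev F ((starRingEnd ℂ) w))‖ := by
              rw [norm_mul, norm_mul, Complex.norm_real, Real.norm_eq_abs, Complex.norm_real, Real.norm_eq_abs,
                _root_.abs_of_nonneg (by linarith : (0:ℝ) ≤ 1 - t), _root_.abs_of_pos ht0]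
          _ ≤ (1 - t) * m₁ w + t * m₁ w := by
              gcongr
              · exact ((x.2).2 w hw).2
              · exact (hF.2 w hw).2
          _ = m₁ w := by ring
  have hyball : (⟨y, hyS⟩ : S) ∈ Metric.ball x ε := by
    rw [Metric.mem_ball, Subtype.dist_eq, dist_eq_norm]
    have e : y - (x : H) = ((t : ℝ) : ℂ) • (F - (x : H)) := by
      rw [hy, smul_sub]
      have : ((1 - t : ℝ) : ℂ) = 1 - ((t : ℝ) : ℂ) := by push_cast; ring
      rw [this, sub_smul, one_smul]
      abel
    rw [e, norm_smul]
    simp only [Complex.norm_real, Real.norm_eq_abs, abs_of_pos ht0]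
    have h1 : ‖F - (x : H)‖ ≤ 2 := by
      calc ‖F - (x : H)‖ ≤ ‖F‖ + ‖(x : H)‖ := norm_sub_le _ _
        _ ≤ 1 + 1 := add_le_add hF.1 x.2.1
        _ = 2 := by norm_num
    have h2 : t ≤ ε / 3 := min_le_left _ _
    calc t * ‖F - (x : H)‖ ≤ (ε / 3) * 2 := by
          apply mul_le_mul h2 h1 (norm_nonneg _) (by linarith)
      _ < ε := by linarith
  have hyn : (⟨y, hyS⟩ : S) ∈ f n := hball' hyball
  have hy1 := (hyn z hz).1
  have hy2 := (hyn z hz).2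
  have hx1 := (hxn z hz).1
  have hx2 := (hxn z hz).2
  have e1 : ev y z = ((1 - t : ℝ) : ℂ) * ev (x : H) z + ((t : ℝ) : ℂ) * ev F z := by
    simp [hy, map_add, map_smul]
  have e2 : (starRingEnd ℂ) (ev y ((starRingEnd ℂ) z))
      = ((1 - t : ℝ) : ℂ) * (starRingEnd ℂ) (ev (x : H) ((starRingEnd ℂ) z))
        + ((t : ℝ) : ℂ) * (starRingEnd ℂ) (ev F ((starRingEnd ℂ) z)) := by
    have : ev y ((starRingEnd ℂ) z)
        = ((1 - t : ℝ) : ℂ) * ev (x : H) ((starRingEnd ℂ) z)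
          + ((t : ℝ) : ℂ) * ev F ((starRingEnd ℂ) z) := by
      simp [hy, map_add, map_smul]
    rw [this, map_add, map_mul, map_mul]
    simp only [Complex.conj_ofReal]
  constructor
  · have := abs_of_combo ht0 ht1 (by rw [← e1]; exact hy1) hx1
    calc ‖ev F z‖ ≤ 2 * ((n : ℝ) * m₂ z) / t := this
      _ ≤ K * m₂ z := by
        rw [hKdef, div_mul_eq_mul_div, div_le_div_iff₀ ht0 ht0]
        nlinarith
  · have := abs_of_combo ht0 ht1 (by rw [← e2]; exact hy2) hx2
    calc ‖(starRingEnd ℂ) (ev F ((starRingEnd ℂ) z))‖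
        ≤ 2 * ((n : ℝ) * m₂ z) / t := this
      _ ≤ K * m₂ z := by
        rw [hKdef, div_mul_eq_mul_div, div_le_div_iff₀ ht0 ht0]
        nlinarith


lemma zero_mem_ASet : (0 : ℝ) ∈ ASet ev D m (0 : H) :=
  ⟨le_refl 0, fun z _ => by simp⟩

lemma mnorm_zero : mnorm ev D m (0 : H) = 0 := by
  rw [mnorm_eq]
  have h1 : sInf (ASet ev D m (0 : H)) = 0 :=
    le_antisymm (csInf_le (bddBelow_ASet ev 0) (zero_mem_ASet ev))
      (le_csInf ⟨0, zero_mem_ASet ev⟩ fun C hC => hC.1)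
  simp [h1]

lemma zero_mem_Rm : (0 : H) ∈ RmSet ev D m := ⟨0, le_refl 0, fun z _ => by simp⟩

lemma eq_zero_of_mnorm_eq_zero {F : H} (h : mnorm ev D m F = 0) : F = 0 := by
  have h1 : ‖F‖ ≤ 0 := h ▸ norm_le_mnorm ev F
  exact norm_le_zero_iff.1 h1

lemma mnorm_nonneg (F : H) : 0 ≤ mnorm ev D m F :=
  le_trans (norm_nonneg F) (norm_le_mnorm ev F)

/-- Normalization: `F / ‖F‖_m ∈ B_m(H)`. -/
lemma normalize_mem_Bm (hm : ∀ z ∈ D, 0 ≤ m z) {F : H} (hF : F ∈ RmSet ev D m)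
    (hμ : 0 < mnorm ev D m F) :
    (((mnorm ev D m F)⁻¹ : ℝ) : ℂ) • F ∈ BmSet ev D m := by
  refine smul_mem_Bm ev hμ (norm_le_mnorm ev F) fun z hz => ?_
  have hmem := sInf_mem_ASet ev hF hm
  have hle : sInf (ASet ev D m F) * m z ≤ mnorm ev D m F * m z :=
    mul_le_mul_of_nonneg_right (le_max_right _ _) (hm z hz)
  exact ⟨le_trans (hmem.2 z hz).1 hle, le_trans (hmem.2 z hz).2 hle⟩

lemma abs_ev_real_smul (r : ℝ) (F : H) (z : ℂ) :
    ‖ev (((r : ℝ) : ℂ) • F) z‖ = |r| * ‖ev F z‖ := by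
  rw [map_smul]
  simp [Complex.norm_real]

lemma abs_ev_conj_real_smul (r : ℝ) (F : H) (z : ℂ) :
    ‖(starRingEnd ℂ) (ev (((r : ℝ) : ℂ) • F) ((starRingEnd ℂ) z))‖
      = |r| * ‖(starRingEnd ℂ) (ev F ((starRingEnd ℂ) z))‖ := by
  rw [map_smul]
  simp [Complex.norm_real, Complex.norm_conj]

/-- Uniform bounds on the unit ball yield inclusion of `RmSet`s together with norm control. -/
lemma mnorm_le_of_uniform (hm₁ : ∀ z ∈ D, 0 ≤ m₁ z) {K : ℝ} (hK : 0 ≤ K)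
    (hb : ∀ F ∈ BmSet ev D m₁, ∀ z ∈ D,
      ‖ev F z‖ ≤ K * m₂ z ∧
      ‖(starRingEnd ℂ) (ev F ((starRingEnd ℂ) z))‖ ≤ K * m₂ z)
    {F : H} (hF : F ∈ RmSet ev D m₁) :
    F ∈ RmSet ev D m₂ ∧ mnorm ev D m₂ F ≤ max 1 K * mnorm ev D m₁ F := by
  set μ : ℝ := mnorm ev D m₁ F with hμdef
  rcases eq_or_lt_of_le (mnorm_nonneg ev (m := m₁) F) with h0 | h0
  · have hF0 : F = 0 := eq_zero_of_mnorm_eq_zero ev (m := m₁)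
      (by rw [← hμdef]; exact h0.symm)
    subst hF0
    refine ⟨zero_mem_Rm ev, ?_⟩
    show mnorm ev D m₂ 0 ≤ max 1 K * mnorm ev D m₁ 0
    rw [mnorm_zero, mnorm_zero, mul_zero]
  · have hFn : (((μ)⁻¹ : ℝ) : ℂ) • F ∈ BmSet ev D m₁ := normalize_mem_Bm ev hm₁ hF h0
    have hμK : μ * K ∈ ASet ev D m₂ F := by
      refine ⟨mul_nonneg (le_of_lt h0) hK, fun z hz => ?_⟩
      have h1 := (hb _ hFn z hz).1
      have h2 := (hb _ hFn z hz).2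
      rw [abs_ev_real_smul, _root_.abs_of_pos (inv_pos.2 h0)] at h1
      rw [abs_ev_conj_real_smul, _root_.abs_of_pos (inv_pos.2 h0)] at h2
      constructor
      · have := mul_le_mul_of_nonneg_left h1 (le_of_lt h0)
        rw [← mul_assoc, mul_inv_cancel₀ (ne_of_gt h0), one_mul] at this
        calc ‖ev F z‖ ≤ μ * (K * m₂ z) := this
          _ = μ * K * m₂ z := by ring
      · have := mul_le_mul_of_nonneg_left h2 (le_of_lt h0)
        rw [← mul_assoc, mul_inv_cancel₀ (ne_of_gt h0), one_mul] at this
        calc ‖(starRingEnd ℂ) (ev F ((starRingEnd ℂ) z))‖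
            ≤ μ * (K * m₂ z) := this
          _ = μ * K * m₂ z := by ring
    refine ⟨⟨μ * K, hμK⟩, ?_⟩
    have hn2 : mnorm ev D m₂ F ≤ max μ (μ * K) := by
      refine max_le ?_ ?_
      · exact le_trans (norm_le_mnorm ev (m := m₁) F) (le_max_left _ _)
      · exact le_trans (csInf_le (bddBelow_ASet ev F) hμK) (le_max_right _ _)
    calc mnorm ev D m₂ F ≤ max μ (μ * K) := hn2
      _ = μ * max 1 K := by rw [mul_max_of_nonneg _ _ (le_of_lt h0), mul_one]
      _ = max 1 K * μ := mul_comm _ _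

/-- A member of `RmSet` with `‖F‖_m ≤ 1` lies in the ball. -/
lemma mem_Bm_of_mnorm_le_one (hm : ∀ z ∈ D, 0 ≤ m z) {F : H} (hF : F ∈ RmSet ev D m)
    (h1 : mnorm ev D m F ≤ 1) : F ∈ BmSet ev D m := by
  refine ⟨le_trans (norm_le_mnorm ev F) h1, fun z hz => ?_⟩
  have hmem := sInf_mem_ASet ev hF hm
  have hle : sInf (ASet ev D m F) * m z ≤ 1 * m z :=
    mul_le_mul_of_nonneg_right (le_trans (le_max_right ‖F‖ _) h1) (hm z hz)
  rw [one_mul] at hle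
  exact ⟨le_trans (hmem.2 z hz).1 hle, le_trans (hmem.2 z hz).2 hle⟩

lemma one_mem_ASet_of_mem_Bm {F : H} (hF : F ∈ BmSet ev D m) :
    (1 : ℝ) ∈ ASet ev D m F :=
  ⟨zero_le_one, fun z hz => by rw [one_mul]; exact hF.2 z hz⟩

lemma mnorm_le_one_of_mem_Bm {F : H} (hF : F ∈ BmSet ev D m) :
    mnorm ev D m F ≤ 1 :=
  mnorm_le ev (one_mem_ASet_of_mem_Bm ev hF) hF.1


lemma uniform_of_smul_subset {l : ℝ} (hl : 0 < l)
    (hsub : (fun G : H => (l : ℂ) • G) '' BmSet ev D m₁ ⊆ BmSet ev D m₂) :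
    ∀ F ∈ BmSet ev D m₁, ∀ z ∈ D,
      ‖ev F z‖ ≤ l⁻¹ * m₂ z ∧
      ‖(starRingEnd ℂ) (ev F ((starRingEnd ℂ) z))‖ ≤ l⁻¹ * m₂ z := by
  intro F hF z hz
  have h : (l : ℂ) • F ∈ BmSet ev D m₂ := hsub ⟨F, hF, rfl⟩
  have h1 := (h.2 z hz).1
  have h2 := (h.2 z hz).2
  rw [abs_ev_real_smul, _root_.abs_of_pos hl] at h1
  rw [abs_ev_conj_real_smul, _root_.abs_of_pos hl] at h2
  constructor
  · rw [inv_mul_eq_div, le_div_iff₀ hl]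
    linarith
  · rw [inv_mul_eq_div, le_div_iff₀ hl]
    linarith

lemma uniform_of_superset {l : ℝ} (hl : 0 < l)
    (hsub : BmSet ev D m₂ ⊆ (fun G : H => (l : ℂ) • G) '' BmSet ev D m₁) :
    ∀ G ∈ BmSet ev D m₂, ∀ z ∈ D,
      ‖ev G z‖ ≤ l * m₁ z ∧
      ‖(starRingEnd ℂ) (ev G ((starRingEnd ℂ) z))‖ ≤ l * m₁ z := by
  intro G hG z hz
  obtain ⟨G', hG', rfl⟩ := hsub hG
  have h1 := (hG'.2 z hz).1
  have h2 := (hG'.2 z hz).2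
  rw [abs_ev_real_smul, _root_.abs_of_pos hl]
  rw [abs_ev_conj_real_smul, _root_.abs_of_pos hl]
  exact ⟨mul_le_mul_of_nonneg_left h1 (le_of_lt hl),
    mul_le_mul_of_nonneg_left h2 (le_of_lt hl)⟩

lemma smul_subset_of_uniform {K : ℝ} (hK : 1 ≤ K)
    (hb : ∀ F ∈ BmSet ev D m₁, ∀ z ∈ D,
      ‖ev F z‖ ≤ K * m₂ z ∧
      ‖(starRingEnd ℂ) (ev F ((starRingEnd ℂ) z))‖ ≤ K * m₂ z) :
    (fun G : H => ((K⁻¹ : ℝ) : ℂ) • G) '' BmSet ev D m₁ ⊆ BmSet ev D m₂ := by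
  rintro _ ⟨F, hF, rfl⟩
  exact smul_mem_Bm ev (lt_of_lt_of_le one_pos hK) (hF.1.trans hK) (hb F hF)

lemma superset_of_uniform {K : ℝ} (hK : 1 ≤ K)
    (hb : ∀ G ∈ BmSet ev D m₂, ∀ z ∈ D,
      ‖ev G z‖ ≤ K * m₁ z ∧
      ‖(starRingEnd ℂ) (ev G ((starRingEnd ℂ) z))‖ ≤ K * m₁ z) :
    BmSet ev D m₂ ⊆ (fun G : H => ((K : ℝ) : ℂ) • G) '' BmSet ev D m₁ := by
  intro G hG
  have hK0 : (0:ℝ) < K := lt_of_lt_of_le one_pos hK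
  refine ⟨((K⁻¹ : ℝ) : ℂ) • G,
    smul_mem_Bm ev hK0 (hG.1.trans hK) (hb G hG), ?_⟩
  show ((K : ℝ) : ℂ) • ((K⁻¹ : ℝ) : ℂ) • G = G
  rw [smul_smul, ← Complex.ofReal_mul, mul_inv_cancel₀ (ne_of_gt hK0),
    Complex.ofReal_one, one_smul]

lemma flat_le_of_smul_subset (heval : ∀ w : ℂ, Continuous fun F : H => ev F w)
    (hm₁ : ∀ z ∈ D, 0 ≤ m₁ z) {l : ℝ} (hl : 0 < l)
    (hsub : (fun G : H => (l : ℂ) • G) '' BmSet ev D m₁ ⊆ BmSet ev D m₂) (z : ℂ) :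
    mflat ev D m₁ z ≤ l⁻¹ * mflat ev D m₂ z := by
  have h0 : (0 : H) ∈ BmSet ev D m₂ := by
    have := hsub ⟨0, zero_mem_Bm ev hm₁, rfl⟩
    simpa using this
  have hflat2 : 0 ≤ mflat ev D m₂ z :=
    le_csSup (bddAbove_flatSet ev heval z) ⟨0, h0, by simp⟩
  refine Real.sSup_le ?_ (mul_nonneg (inv_nonneg.2 (le_of_lt hl)) hflat2)
  rintro x ⟨F, hF, rfl⟩
  have hm := abs_le_mflat ev heval (hsub ⟨F, hF, rfl⟩) z
  rw [abs_ev_real_smul, _root_.abs_of_pos hl] at hm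
  rw [inv_mul_eq_div, le_div_iff₀ hl]
  linarith

lemma flat_le_of_superset (heval : ∀ w : ℂ, Continuous fun F : H => ev F w)
    (hm₁ : ∀ z ∈ D, 0 ≤ m₁ z) {l : ℝ} (hl : 0 < l)
    (hsub : BmSet ev D m₂ ⊆ (fun G : H => (l : ℂ) • G) '' BmSet ev D m₁) (z : ℂ) :
    mflat ev D m₂ z ≤ l * mflat ev D m₁ z := by
  refine Real.sSup_le ?_ (mul_nonneg (le_of_lt hl) (mflat_nonneg ev hm₁ heval z))
  rintro x ⟨G, hG, rfl⟩
  obtain ⟨G', hG', rfl⟩ := hsub hG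
  have := abs_le_mflat ev heval hG' z
  show ‖ev ((l : ℂ) • G') z‖ ≤ l * mflat ev D m₁ z
  rw [abs_ev_real_smul, _root_.abs_of_pos hl]
  exact mul_le_mul_of_nonneg_left this (le_of_lt hl)

lemma Rm_subset_of_flat_le (heval : ∀ w : ℂ, Continuous fun F : H => ev F w)
    (hsharp : ∀ F : H, ∃ G : H,
      (∀ z : ℂ, ev G z = (starRingEnd ℂ) (ev F ((starRingEnd ℂ) z))) ∧ ‖G‖ = ‖F‖)
    (hD : D ⊆ {z : ℂ | 0 ≤ z.im})
    (hm₁ : ∀ z ∈ D, 0 ≤ m₁ z) (hm₂ : ∀ z ∈ D, 0 ≤ m₂ z)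
    {c : ℝ} (hc : 0 < c)
    (hle : ∀ z : ℂ, 0 ≤ z.im → mflat ev D m₁ z ≤ c * mflat ev D m₂ z) :
    RmSet ev D m₁ ⊆ RmSet ev D m₂ := by
  intro F hF
  set μ : ℝ := mnorm ev D m₁ F with hμdef
  rcases eq_or_lt_of_le (mnorm_nonneg ev (m := m₁) F) with h0 | h0
  · have hF0 : F = 0 := eq_zero_of_mnorm_eq_zero ev (m := m₁)
      (by rw [← hμdef]; exact h0.symm)
    subst hF0
    exact zero_mem_Rm ev
  · have hFn : ((μ⁻¹ : ℝ) : ℂ) • F ∈ BmSet ev D m₁ := normalize_mem_Bm ev hm₁ hF h0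
    obtain ⟨G, hG, hGe⟩ := sharp_mem_Bm ev hsharp hFn
    refine ⟨μ * c, mul_nonneg (le_of_lt h0) (le_of_lt hc), fun z hz => ?_⟩
    have hz' : 0 ≤ z.im := hD hz
    have key : mflat ev D m₁ z ≤ c * m₂ z :=
      le_trans (hle z hz') (mul_le_mul_of_nonneg_left (mflat_le_m ev hm₂ hz) (le_of_lt hc))
    constructor
    · have h1 : ‖ev (((μ⁻¹ : ℝ) : ℂ) • F) z‖ ≤ c * m₂ z :=
        le_trans (abs_le_mflat ev heval hFn z) key
      rw [abs_ev_real_smul, _root_.abs_of_pos (inv_pos.2 h0)] at h1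
      have := mul_le_mul_of_nonneg_left h1 (le_of_lt h0)
      rw [← mul_assoc, mul_inv_cancel₀ (ne_of_gt h0), one_mul] at this
      calc ‖ev F z‖ ≤ μ * (c * m₂ z) := this
        _ = μ * c * m₂ z := by ring
    · have h2 : ‖(starRingEnd ℂ)
          (ev (((μ⁻¹ : ℝ) : ℂ) • F) ((starRingEnd ℂ) z))‖ ≤ c * m₂ z := by
        rw [← Complex.norm_conj, ← hGe z, Complex.norm_conj] at *
        calc ‖ev G z‖ ≤ mflat ev D m₁ z := abs_le_mflat ev heval hG z
          _ ≤ c * m₂ z := key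
      rw [abs_ev_conj_real_smul, _root_.abs_of_pos (inv_pos.2 h0)] at h2
      have := mul_le_mul_of_nonneg_left h2 (le_of_lt h0)
      rw [← mul_assoc, mul_inv_cancel₀ (ne_of_gt h0), one_mul] at this
      calc ‖(starRingEnd ℂ) (ev F ((starRingEnd ℂ) z))‖
          ≤ μ * (c * m₂ z) := this
        _ = μ * c * m₂ z := by ring

lemma Bm_subset_of_flat_le (heval : ∀ w : ℂ, Continuous fun F : H => ev F w)
    (hsharp : ∀ F : H, ∃ G : H,
      (∀ z : ℂ, ev G z = (starRingEnd ℂ) (ev F ((starRingEnd ℂ) z))) ∧ ‖G‖ = ‖F‖)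
    (hD : D ⊆ {z : ℂ | 0 ≤ z.im}) (hm₂ : ∀ z ∈ D, 0 ≤ m₂ z)
    (hle : ∀ z : ℂ, 0 ≤ z.im → mflat ev D m₁ z ≤ mflat ev D m₂ z) :
    BmSet ev D m₁ ⊆ BmSet ev D m₂ := by
  intro F hF
  obtain ⟨G, hG, hGe⟩ := sharp_mem_Bm ev hsharp hF
  refine ⟨hF.1, fun z hz => ?_⟩
  have hz' : 0 ≤ z.im := hD hz
  have key : mflat ev D m₁ z ≤ m₂ z := le_trans (hle z hz') (mflat_le_m ev hm₂ hz)
  constructor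
  · exact le_trans (abs_le_mflat ev heval hF z) key
  · have : ‖(starRingEnd ℂ) (ev F ((starRingEnd ℂ) z))‖
        = ‖ev G z‖ := by rw [hGe z, Complex.norm_conj]
    rw [this]
    exact le_trans (abs_le_mflat ev heval hG z) key

end Aux

/-- **Statement 18.** (a) `R_{m₁}(H) = R_{m₂}(H)` iff `m₁^♭ ≍ m₂^♭`, iff
`λ₁·B_{m₁}(H) ⊆ B_{m₂}(H) ⊆ λ₂·B_{m₁}(H)` for some `λ₁, λ₂ > 0`; in that case the
norms `‖·‖_{m₁}` and `‖·‖_{m₂}` are equivalent.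
(b) `B_{m₁}(H) = B_{m₂}(H)` iff `m₁^♭ = m₂^♭`, iff `R_{m₁}(H) = R_{m₂}(H)` with
`‖·‖_{m₁} = ‖·‖_{m₂}`. -/
theorem rm_eq_iff_mflat_equiv_and_bm_eq_iff_mflat_eq
    (ev : H →ₗ[ℂ] (ℂ → ℂ)) (hinj : Function.Injective ev)
    (hentire : ∀ F : H, Differentiable ℂ (ev F))
    (heval : ∀ w : ℂ, Continuous fun F : H => ev F w)
    (hsharp : ∀ F : H, ∃ G : H,
      (∀ z : ℂ, ev G z = (starRingEnd ℂ) (ev F ((starRingEnd ℂ) z))) ∧ ‖G‖ = ‖F‖)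
    (D : Set ℂ) (hD : D ⊆ {z : ℂ | 0 ≤ z.im})
    (m₁ m₂ : ℂ → ℝ) (hm₁ : ∀ z ∈ D, 0 ≤ m₁ z) (hm₂ : ∀ z ∈ D, 0 ≤ m₂ z) :
    -- (a)
    ((RmSet ev D m₁ = RmSet ev D m₂) ↔
      (∃ c₁ c₂ : ℝ, 0 < c₁ ∧ 0 < c₂ ∧ ∀ z : ℂ, 0 ≤ z.im →
        c₁ * mflat ev D m₂ z ≤ mflat ev D m₁ z ∧
          mflat ev D m₁ z ≤ c₂ * mflat ev D m₂ z)) ∧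
    ((RmSet ev D m₁ = RmSet ev D m₂) ↔
      (∃ l₁ l₂ : ℝ, 0 < l₁ ∧ 0 < l₂ ∧
        (fun G : H => (l₁ : ℂ) • G) '' BmSet ev D m₁ ⊆ BmSet ev D m₂ ∧
        BmSet ev D m₂ ⊆ (fun G : H => (l₂ : ℂ) • G) '' BmSet ev D m₁)) ∧
    ((RmSet ev D m₁ = RmSet ev D m₂) →
      ∃ c C : ℝ, 0 < c ∧ c ≤ C ∧ ∀ F ∈ RmSet ev D m₁,
        c * mnorm ev D m₁ F ≤ mnorm ev D m₂ F ∧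
          mnorm ev D m₂ F ≤ C * mnorm ev D m₁ F) ∧
    -- (b)
    ((BmSet ev D m₁ = BmSet ev D m₂) ↔
      (∀ z : ℂ, 0 ≤ z.im → mflat ev D m₁ z = mflat ev D m₂ z)) ∧
    ((BmSet ev D m₁ = BmSet ev D m₂) ↔
      (RmSet ev D m₁ = RmSet ev D m₂ ∧
        ∀ F ∈ RmSet ev D m₁, mnorm ev D m₁ F = mnorm ev D m₂ F)) := by
  have hP1P3 : RmSet ev D m₁ = RmSet ev D m₂ →
      ∃ l₁ l₂ : ℝ, 0 < l₁ ∧ 0 < l₂ ∧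
        (fun G : H => (l₁ : ℂ) • G) '' BmSet ev D m₁ ⊆ BmSet ev D m₂ ∧
        BmSet ev D m₂ ⊆ (fun G : H => (l₂ : ℂ) • G) '' BmSet ev D m₁ := by
    intro h
    have hsub₁ : BmSet ev D m₁ ⊆ RmSet ev D m₂ := by
      intro F hF
      rw [← h]
      exact ⟨1, Aux.one_mem_ASet_of_mem_Bm ev hF⟩
    have hsub₂ : BmSet ev D m₂ ⊆ RmSet ev D m₁ := by
      intro F hF
      rw [h]
      exact ⟨1, Aux.one_mem_ASet_of_mem_Bm ev hF⟩
    obtain ⟨K₁, hK₁, hb₁⟩ := Aux.uniform_bound ev heval hm₁ hm₂ hsub₁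
    obtain ⟨K₂, hK₂, hb₂⟩ := Aux.uniform_bound ev heval hm₂ hm₁ hsub₂
    exact ⟨K₁⁻¹, K₂, inv_pos.2 (lt_of_lt_of_le one_pos hK₁),
      lt_of_lt_of_le one_pos hK₂,
      Aux.smul_subset_of_uniform ev hK₁ hb₁, Aux.superset_of_uniform ev hK₂ hb₂⟩
  have hP3P2 : (∃ l₁ l₂ : ℝ, 0 < l₁ ∧ 0 < l₂ ∧
        (fun G : H => (l₁ : ℂ) • G) '' BmSet ev D m₁ ⊆ BmSet ev D m₂ ∧
        BmSet ev D m₂ ⊆ (fun G : H => (l₂ : ℂ) • G) '' BmSet ev D m₁) →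
      (∃ c₁ c₂ : ℝ, 0 < c₁ ∧ 0 < c₂ ∧ ∀ z : ℂ, 0 ≤ z.im →
        c₁ * mflat ev D m₂ z ≤ mflat ev D m₁ z ∧
          mflat ev D m₁ z ≤ c₂ * mflat ev D m₂ z) := by
    rintro ⟨l₁, l₂, hl₁, hl₂, hsub, hsup⟩
    refine ⟨l₂⁻¹, l₁⁻¹, inv_pos.2 hl₂, inv_pos.2 hl₁, fun z _ => ?_⟩
    constructor
    · have := Aux.flat_le_of_superset ev heval hm₁ hl₂ hsup z
      rw [inv_mul_eq_div, div_le_iff₀ hl₂]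
      linarith
    · exact Aux.flat_le_of_smul_subset ev heval hm₁ hl₁ hsub z
  have hP2P1 : (∃ c₁ c₂ : ℝ, 0 < c₁ ∧ 0 < c₂ ∧ ∀ z : ℂ, 0 ≤ z.im →
        c₁ * mflat ev D m₂ z ≤ mflat ev D m₁ z ∧
          mflat ev D m₁ z ≤ c₂ * mflat ev D m₂ z) →
      RmSet ev D m₁ = RmSet ev D m₂ := by
    rintro ⟨c₁, c₂, hc₁, hc₂, hcc⟩
    apply Set.Subset.antisymm
    · exact Aux.Rm_subset_of_flat_le ev heval hsharp hD hm₁ hm₂ hc₂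
        fun z hz => (hcc z hz).2
    · refine Aux.Rm_subset_of_flat_le ev heval hsharp hD hm₂ hm₁ (inv_pos.2 hc₁)
        fun z hz => ?_
      have := (hcc z hz).1
      rw [inv_mul_eq_div, le_div_iff₀ hc₁]
      linarith
  refine ⟨⟨fun h => hP3P2 (hP1P3 h), hP2P1⟩, ⟨hP1P3, fun h3 => hP2P1 (hP3P2 h3)⟩,
    ?_, ?_, ?_⟩
  · -- norm equivalence
    intro h
    have hsub₁ : BmSet ev D m₁ ⊆ RmSet ev D m₂ := by
      intro F hF
      rw [← h]
      exact ⟨1, Aux.one_mem_ASet_of_mem_Bm ev hF⟩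
    have hsub₂ : BmSet ev D m₂ ⊆ RmSet ev D m₁ := by
      intro F hF
      rw [h]
      exact ⟨1, Aux.one_mem_ASet_of_mem_Bm ev hF⟩
    obtain ⟨K₁, hK₁, hb₁⟩ := Aux.uniform_bound ev heval hm₁ hm₂ hsub₁
    obtain ⟨K₂, hK₂, hb₂⟩ := Aux.uniform_bound ev heval hm₂ hm₁ hsub₂
    have hM₂ : (0:ℝ) < max 1 K₂ := lt_of_lt_of_le one_pos (le_max_left _ _)
    refine ⟨(max 1 K₂)⁻¹, max 1 K₁, inv_pos.2 hM₂, ?_, ?_⟩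
    · calc (max 1 K₂)⁻¹ ≤ 1 := by
            rw [inv_le_one_iff₀]
            right
            exact le_max_left _ _
        _ ≤ max 1 K₁ := le_max_left _ _
    · intro F hF
      have h₂ := Aux.mnorm_le_of_uniform ev hm₁ (by linarith : (0:ℝ) ≤ K₁) hb₁ hF
      have hF₂ : F ∈ RmSet ev D m₂ := h ▸ hF
      have h₁ := Aux.mnorm_le_of_uniform ev hm₂ (by linarith : (0:ℝ) ≤ K₂) hb₂ hF₂
      constructor
      · rw [inv_mul_eq_div, div_le_iff₀ hM₂]
        calc mnorm ev D m₁ F ≤ max 1 K₂ * mnorm ev D m₂ F := h₁.2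
          _ = mnorm ev D m₂ F * max 1 K₂ := mul_comm _ _
      · exact h₂.2
  · -- (b) first iff
    constructor
    · intro h z _
      unfold mflat
      rw [h]
    · intro h
      apply Set.Subset.antisymm
      · exact Aux.Bm_subset_of_flat_le ev heval hsharp hD hm₂
          fun z hz => le_of_eq (h z hz)
      · exact Aux.Bm_subset_of_flat_le ev heval hsharp hD hm₁
          fun z hz => le_of_eq (h z hz).symm
  · -- (b) second iff
    constructor
    · intro h
      have hb12 : ∀ F ∈ BmSet ev D m₁, ∀ z ∈ D,
          ‖ev F z‖ ≤ 1 * m₂ z ∧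
          ‖(starRingEnd ℂ) (ev F ((starRingEnd ℂ) z))‖ ≤ 1 * m₂ z := by
        intro F hF z hz
        have hF2 : F ∈ BmSet ev D m₂ := h ▸ hF
        rw [one_mul]
        exact hF2.2 z hz
      have hb21 : ∀ F ∈ BmSet ev D m₂, ∀ z ∈ D,
          ‖ev F z‖ ≤ 1 * m₁ z ∧
          ‖(starRingEnd ℂ) (ev F ((starRingEnd ℂ) z))‖ ≤ 1 * m₁ z := by
        intro F hF z hz
        have hF2 : F ∈ BmSet ev D m₁ := h ▸ hF
        rw [one_mul]
        exact hF2.2 z hz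
      have hReq : RmSet ev D m₁ = RmSet ev D m₂ := by
        apply Set.Subset.antisymm
        · exact fun F hF => (Aux.mnorm_le_of_uniform ev hm₁ zero_le_one hb12 hF).1
        · exact fun F hF => (Aux.mnorm_le_of_uniform ev hm₂ zero_le_one hb21 hF).1
      refine ⟨hReq, fun F hF => ?_⟩
      have e1 := (Aux.mnorm_le_of_uniform ev hm₁ zero_le_one hb12 hF).2
      have hF₂ : F ∈ RmSet ev D m₂ := hReq ▸ hF
      have e2 := (Aux.mnorm_le_of_uniform ev hm₂ zero_le_one hb21 hF₂).2
      rw [max_self, one_mul] at e1 e2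
      linarith
    · rintro ⟨hR, hn⟩
      apply Set.Subset.antisymm
      · intro F hF
        have hFR : F ∈ RmSet ev D m₁ := ⟨1, Aux.one_mem_ASet_of_mem_Bm ev hF⟩
        have h2 : mnorm ev D m₂ F ≤ 1 := by
          rw [← hn F hFR]
          exact Aux.mnorm_le_one_of_mem_Bm ev hF
        exact Aux.mem_Bm_of_mnorm_le_one ev hm₂ (hR ▸ hFR) h2
      · intro F hF
        have hFR : F ∈ RmSet ev D m₂ := ⟨1, Aux.one_mem_ASet_of_mem_Bm ev hF⟩
        have hFR1 : F ∈ RmSet ev D m₁ := hR.symm ▸ hFR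
        have h1 : mnorm ev D m₁ F ≤ 1 := by
          rw [hn F hFR1]
          exact Aux.mnorm_le_one_of_mem_Bm ev hF
        exact Aux.mem_Bm_of_mnorm_le_one ev hm₁ hFR1 h1
end
end

section
/- Let D ⊆ {z ∈ ℂ : Im z ≥ 0} and m : D → [0,∞). Then the function m^♭ is real-valued (finite) and continuous on the closed upper half-plane {z ∈ ℂ : Im z ≥ 0}. -/
open Complex Filter Topology

noncomputable section

variable {H : Type*} [NormedAddCommGroup H] [InnerProductSpace ℂ H] [CompleteSpace H]

/-- **Statement 19.** The sharp majorant `m^♭` is finite (the defining supremum is over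
a set which is bounded above) and continuous on the closed upper half-plane. -/
theorem mflat_finite_and_continuousOn
    (ev : H →ₗ[ℂ] (ℂ → ℂ)) (hinj : Function.Injective ev)
    (hentire : ∀ F : H, Differentiable ℂ (ev F))
    (heval : ∀ w : ℂ, Continuous fun F : H => ev F w)
    (hsharp : ∀ F : H, ∃ G : H,
      (∀ z : ℂ, ev G z = (starRingEnd ℂ) (ev F ((starRingEnd ℂ) z))) ∧ ‖G‖ = ‖F‖)
    (D : Set ℂ) (hD : D ⊆ {z : ℂ | 0 ≤ z.im})
    (m : ℂ → ℝ) (hm : ∀ z ∈ D, 0 ≤ m z) :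
    (∀ z : ℂ, 0 ≤ z.im →
      BddAbove ((fun F : H => ‖ev F z‖) '' BmSet ev D m)) ∧
    ContinuousOn (mflat ev D m) {z : ℂ | 0 ≤ z.im} := by
  classical
  -- point evaluation as a continuous linear functional
  set Φ : ℂ → (H →L[ℂ] ℂ) := fun z => ⟨(LinearMap.proj z).comp ev, heval z⟩ with hΦdef
  have hΦ : ∀ z (F : H), Φ z F = ev F z := fun z F => rfl
  have hbdd : ∀ z : ℂ, BddAbove ((fun F : H => ‖ev F z‖) '' BmSet ev D m) := by
    intro z
    refine ⟨‖Φ z‖, ?_⟩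
    rintro _ ⟨F, hF, rfl⟩
    calc ‖ev F z‖ = ‖Φ z F‖ := rfl
      _ ≤ ‖Φ z‖ * ‖F‖ := (Φ z).le_opNorm F
      _ ≤ ‖Φ z‖ * 1 := mul_le_mul_of_nonneg_left hF.1 (norm_nonneg _)
      _ = ‖Φ z‖ := mul_one _
  refine ⟨fun z _ => hbdd z, ?_⟩
  -- continuity: we show `mflat` is continuous on all of ℂ
  suffices h : Continuous (mflat ev D m) from h.continuousOn
  rw [continuous_iff_continuousAt]
  intro z0
  -- Banach–Steinhaus: uniform bound on a compact neighborhood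
  obtain ⟨C, hC⟩ : ∃ C : ℝ, ∀ w : Metric.closedBall z0 2, ‖Φ (w : ℂ)‖ ≤ C := by
    apply banach_steinhaus
    intro F
    obtain ⟨C, hC⟩ := (isCompact_closedBall z0 2).exists_bound_of_continuousOn
      ((hentire F).continuous.continuousOn)
    exact ⟨C, fun w => by simpa [hΦ] using hC w w.2⟩
  set C' : ℝ := max C 0 with hC'def
  have hC'0 : (0:ℝ) ≤ C' := le_max_right _ _
  have hC' : ∀ w ∈ Metric.closedBall z0 2, ∀ F : H, ‖F‖ ≤ 1 →
      ‖ev F w‖ ≤ C' := by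
    intro w hw F hF
    calc ‖ev F w‖ = ‖Φ w F‖ := rfl
      _ ≤ ‖Φ w‖ * ‖F‖ := (Φ w).le_opNorm F
      _ ≤ C' * 1 := mul_le_mul (le_trans (hC ⟨w, hw⟩) (le_max_left _ _)) hF
          (norm_nonneg _) hC'0
      _ = C' := mul_one _
  -- Cauchy estimate: derivative bound on the smaller ball
  have hderiv : ∀ F : H, ‖F‖ ≤ 1 → ∀ u ∈ Metric.closedBall z0 1,
      ‖deriv (ev F) u‖ ≤ C' := by
    intro F hF u hu
    have h1 : ∀ ζ ∈ Metric.sphere u 1, ‖ev F ζ‖ ≤ C' := by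
      intro ζ hζ
      apply hC' ζ _ F hF
      have : dist ζ z0 ≤ dist ζ u + dist u z0 := dist_triangle _ _ _
      simp only [Metric.mem_closedBall] at hu ⊢
      simp only [Metric.mem_sphere] at hζ
      linarith
    have := norm_deriv_le_of_forall_mem_sphere_norm_le one_pos
      ((hentire F).diffContOnCl) h1
    simpa using this
  -- Lipschitz estimate for `mflat` on the ball
  have key : ∀ z ∈ Metric.closedBall z0 1, ∀ w ∈ Metric.closedBall z0 1,
      mflat ev D m z ≤ mflat ev D m w + C' * dist z w := by
    intro z hz w hw
    have hw0 : 0 ≤ mflat ev D m w :=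
      Real.sSup_nonneg (by rintro x ⟨F, _, rfl⟩; exact norm_nonneg _)
    apply Real.sSup_le
    · rintro x ⟨F, hF, rfl⟩
      have h1 : ‖ev F z‖ ≤ ‖ev F w‖ + C' * dist z w := by
        have h2 : ‖ev F z - ev F w‖ ≤ C' * ‖z - w‖ :=
          Convex.norm_image_sub_le_of_norm_deriv_le
            (fun u _ => (hentire F).differentiableAt)
            (fun u hu => hderiv F hF.1 u hu) (convex_closedBall z0 1) hw hz
        have h3 : ‖ev F z‖ ≤ ‖ev F w‖ + ‖ev F z - ev F w‖ := by
          simpa using norm_add_le (ev F w) (ev F z - ev F w)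
        rw [Complex.dist_eq]
        calc ‖ev F z‖ ≤ ‖ev F w‖ + ‖ev F z - ev F w‖ := h3
          _ ≤ ‖ev F w‖ + C' * ‖z - w‖ := by
              linarith [h2]
      refine le_trans h1 (add_le_add_left ?_ _)
      exact le_csSup (hbdd w) ⟨F, hF, rfl⟩
    · positivity
  have hlip : LipschitzOnWith C'.toNNReal (mflat ev D m) (Metric.closedBall z0 1) := by
    rw [lipschitzOnWith_iff_dist_le_mul]
    intro z hz w hw
    rw [Real.dist_eq, Real.coe_toNNReal _ hC'0]
    rw [abs_sub_le_iff]
    constructor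
    · linarith [key z hz w hw]
    · have := key w hw z hz
      rw [dist_comm] at this
      linarith
  exact (hlip.continuousOn.continuousWithinAt (Metric.mem_closedBall_self one_pos.le)
    ).continuousAt (Metric.closedBall_mem_nhds z0 one_pos)
end
end
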